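/- arXiv:1505.01305 — 2 statements merged into one kernel-verified Lean document; each statement's English description precedes it below -/
import Mathlib

section
/- Define μ recursively on finite strings in {1,2}* by μ(i) = 1/2 for i ∈ {1,2}, μ(j₁,j₂) = (1 - β_{j₁}β_{j₂})/4, and μ(k₀,k₁,...,kₙ) = a(k₀,k₁)·μ(k₁,...,kₙ) + b(k₀,k₁)·μ(k₂,...,kₙ), where a(i,j) = (1/2)(1 - βᵢ/βⱼ) and b(i,j) = (βᵢ/4)(1/βⱼ - βⱼ), β₁ = sin(2θ) ∈ (0,1), β₂ = -β₁. Then for every string, μ(k₀,...,kₙ) = μ(1,k₀,...,kₙ) + μ(2,k₀,...,kₙ), i.e., the family of cylinder measures is consistent under prepending. -/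
open Real

/-- β₁ = sin 2θ, β₂ = -sin 2θ (symbol 0 stands for "1", symbol 1 for "2"). -/
noncomputable def beta (θ : ℝ) : Fin 2 → ℝ := ![sin (2 * θ), -sin (2 * θ)]

/-- a(i,j) = (1/2)(1 - βᵢ/βⱼ). -/
noncomputable def aCoef (θ : ℝ) (i j : Fin 2) : ℝ := (1 / 2) * (1 - beta θ i / beta θ j)

/-- b(i,j) = (βᵢ/4)(1/βⱼ - βⱼ). -/
noncomputable def bCoef (θ : ℝ) (i j : Fin 2) : ℝ :=
  (beta θ i / 4) * (1 / beta θ j - beta θ j)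

/-- The cylinder measure μ on finite strings over {1,2}. -/
noncomputable def mu (θ : ℝ) : List (Fin 2) → ℝ
  | [] => 1
  | [_] => 1 / 2
  | [i, j] => (1 - beta θ i * beta θ j) / 4
  | k0 :: k1 :: k2 :: rest =>
      aCoef θ k0 k1 * mu θ (k1 :: k2 :: rest) + bCoef θ k0 k1 * mu θ (k2 :: rest)

/-- Consistency of the cylinder measures under prepending:
μ(k₀,...,kₙ) = μ(1,k₀,...,kₙ) + μ(2,k₀,...,kₙ). -/
theorem mu_consistent_prepend (θ : ℝ) (hθ : θ ∈ Set.Ioo 0 (π / 2)) (hθ' : θ ≠ π / 4)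
    (k : Fin 2) (l : List (Fin 2)) :
    mu θ (k :: l) = mu θ (0 :: k :: l) + mu θ (1 :: k :: l) := by
  have hs : sin (2 * θ) ≠ 0 := by
    have h1 : 0 < 2 * θ := by linarith [hθ.1]
    have h2 : 2 * θ < π := by linarith [hθ.2]
    exact ne_of_gt (Real.sin_pos_of_pos_of_lt_pi h1 h2)
  match l with
  | [] =>
    fin_cases k <;> simp [mu, beta] <;> ring
  | j :: rest =>
    have hk : beta θ k ≠ 0 := by fin_cases k <;> simpa [beta] using hs
    have h0 : beta θ 0 = sin (2 * θ) := rfl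
    have h1 : beta θ 1 = -sin (2 * θ) := rfl
    simp only [mu, aCoef, bCoef, h0, h1]
    field_simp
    ring
end

section
/- Let γ ∈ (0,1/4) and p = (1+√(1-4γ))/2. For the map f₁(x) = 1 - 1/(γ⁻¹ - 1/x) on (1-p, p], the fixed point p is a global attractor: for every x ∈ (1-p, p], the iterates f₁ⁿ(x) converge to p. Symmetrically, for f₂(x) = 1/(γ⁻¹ - 1/(1-x)) on [1-p, p), the iterates converge to 1-p. -/
/-- f₁(x) = 1 - 1/(γ⁻¹ - 1/x). -/
noncomputable def f₁ (γ x : ℝ) : ℝ := 1 - 1 / (γ⁻¹ - 1 / x)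
/-- f₂(x) = 1/(γ⁻¹ - 1/(1-x)). -/
noncomputable def f₂ (γ x : ℝ) : ℝ := 1 / (γ⁻¹ - 1 / (1 - x))

lemma f1_step (p : ℝ) (hp1 : 1/2 < p) (hp2 : p < 1)
    (x : ℝ) (hx : x ∈ Set.Ioc (1 - p) p) :
    f₁ (p * (1 - p)) x ∈ Set.Ioc (1 - p) p ∧ x ≤ f₁ (p * (1 - p)) x ∧
      p - f₁ (p * (1 - p)) x = (1 - p)^2 * (p - x) / (x - p * (1 - p)) := by
  set γ := p * (1 - p) with hγ
  obtain ⟨hx1, hx2⟩ := hx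
  have h1p : 0 < 1 - p := by linarith
  have hγ0 : 0 < γ := by nlinarith
  have hγlt : γ < 1 - p := by nlinarith
  have hxγ : 0 < x - γ := by linarith
  have hx0 : 0 < x := by linarith
  have hd : γ⁻¹ - 1/x = (x - γ)/(γ * x) := by field_simp
  have hd0 : 0 < γ⁻¹ - 1/x := by rw [hd]; positivity
  have key : p - f₁ γ x = (1-p)^2*(p-x)/(x-γ) := by
    unfold f₁; rw [hd]; field_simp; ring
  have key2 : f₁ γ x - x = (p - x)*(x - (1-p))/(x - γ) := by
    unfold f₁; rw [hd]; field_simp; ring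
  have h1 : x ≤ f₁ γ x := by nlinarith [key2, div_nonneg (mul_nonneg (by linarith : (0:ℝ) ≤ p - x) (by linarith : (0:ℝ) ≤ x - (1-p))) hxγ.le]
  have h2 : f₁ γ x ≤ p := by nlinarith [key, div_nonneg (mul_nonneg (by positivity : (0:ℝ) ≤ (1-p)^2) (by linarith : (0:ℝ) ≤ p - x)) hxγ.le]
  exact ⟨⟨by linarith, h2⟩, h1, key⟩

/-- For γ ∈ (0,1/4) and p = (1+√(1-4γ))/2: p is a global attractor of f₁ on
(1-p, p], and 1-p is a global attractor of f₂ on [1-p, p). -/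
theorem f_global_attractors (γ : ℝ) (hγ : γ ∈ Set.Ioo 0 (1 / 4))
    (p : ℝ) (hp : p = (1 + Real.sqrt (1 - 4 * γ)) / 2) :
    (∀ x ∈ Set.Ioc (1 - p) p,
      Filter.Tendsto (fun n : ℕ => (f₁ γ)^[n] x) Filter.atTop (nhds p)) ∧
    (∀ x ∈ Set.Ico (1 - p) p,
      Filter.Tendsto (fun n : ℕ => (f₂ γ)^[n] x) Filter.atTop (nhds (1 - p))) := by
  obtain ⟨hγ0, hγ4⟩ := hγ
  set s := Real.sqrt (1 - 4 * γ) with hs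
  have hs2 : s^2 = 1 - 4 * γ := Real.sq_sqrt (by linarith)
  have hs0 : 0 < s := Real.sqrt_pos.mpr (by linarith)
  have hs1 : s < 1 := by nlinarith
  have hp1 : 1/2 < p := by rw [hp]; linarith
  have hp2 : p < 1 := by rw [hp]; linarith
  have hγp : γ = p * (1 - p) := by rw [hp]; nlinarith
  subst hγp
  have main : ∀ x ∈ Set.Ioc (1 - p) p,
      Filter.Tendsto (fun n : ℕ => (f₁ (p * (1-p)))^[n] x) Filter.atTop (nhds p) := by
    intro x hx
    have h1p : 0 < 1 - p := by linarith
    have hxγ : (1-p)^2 < x - p * (1 - p) := by nlinarith [hx.1]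
    set c : ℝ := (1-p)^2 / (x - p * (1-p)) with hc
    have hx0 : 0 < x - p * (1-p) := by nlinarith
    have hc0 : 0 ≤ c := by positivity
    have hc1 : c < 1 := (div_lt_one hx0).mpr hxγ
    have claim : ∀ n : ℕ, x ≤ (f₁ (p*(1-p)))^[n] x ∧ (f₁ (p*(1-p)))^[n] x ∈ Set.Ioc (1-p) p ∧
        p - (f₁ (p*(1-p)))^[n] x ≤ c^n * (p - x) := by
      intro n
      induction n with
      | zero => simpa using hx
      | succ n ih =>
        obtain ⟨ih1, ih2, ih3⟩ := ih
        set a := (f₁ (p*(1-p)))^[n] x with ha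
        obtain ⟨hmem, hle, hkey⟩ := f1_step p hp1 hp2 a ih2
        rw [Function.iterate_succ_apply']
        refine ⟨le_trans ih1 hle, hmem, ?_⟩
        rw [hkey]
        have haγ : 0 < a - p * (1-p) := by nlinarith [ih2.1]
        have h1 : (1-p)^2 * (p - a) / (a - p*(1-p)) ≤ (1-p)^2 * (p - a) / (x - p*(1-p)) := by
          apply div_le_div_of_nonneg_left (by nlinarith [ih2.2] : (0:ℝ) ≤ (1-p)^2 * (p - a)) hx0
          linarith
        have h2 : (1-p)^2 * (p - a) / (x - p*(1-p)) = c * (p - a) := by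
          rw [hc]; ring
        have h3 : c * (p - a) ≤ c * (c^n * (p - x)) := by
          apply mul_le_mul_of_nonneg_left ih3 hc0
        calc (1-p)^2 * (p - a) / (a - p*(1-p)) ≤ c * (p - a) := by rw [← h2]; exact h1
          _ ≤ c * (c^n * (p - x)) := h3
          _ = c^(n+1) * (p - x) := by ring
    have hlim : Filter.Tendsto (fun n : ℕ => c^n * (p - x)) Filter.atTop (nhds 0) := by
      simpa using (tendsto_pow_atTop_nhds_zero_of_lt_one hc0 hc1).mul_const (p - x)
    have hsq : Filter.Tendsto (fun n : ℕ => p - (f₁ (p*(1-p)))^[n] x) Filter.atTop (nhds 0) := by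
      apply squeeze_zero (fun n => by linarith [(claim n).2.1.2]) (fun n => (claim n).2.2) hlim
    have := Filter.Tendsto.const_sub p hsq
    simpa using this
  refine ⟨main, ?_⟩
  intro x hx
  have hsym : ∀ y : ℝ, f₂ (p*(1-p)) y = 1 - f₁ (p*(1-p)) (1 - y) := by
    intro y; simp [f₁, f₂]
  have hit : ∀ (n : ℕ) (y : ℝ), (f₂ (p*(1-p)))^[n] y = 1 - (f₁ (p*(1-p)))^[n] (1 - y) := by
    intro n
    induction n with
    | zero => simp
    | succ n ih =>
      intro y
      rw [Function.iterate_succ_apply, Function.iterate_succ_apply, ih, hsym]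
      ring_nf
  have hx' : 1 - x ∈ Set.Ioc (1 - p) p := ⟨by linarith [hx.2], by linarith [hx.1]⟩
  have := Filter.Tendsto.const_sub 1 (main (1 - x) hx')
  simp only [← hit] at this
  convert this using 2
end
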